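/- Let q = p^m with p an odd prime and q ≡ 1 (mod 6), and let f(x) = x^{q+2} on F_{q^2}. Then f is APN: for every a ∈ F_{q^2}^* and b ∈ F_{q^2}, the equation f(x+a) - f(x) = b has at most 2 solutions x ∈ F_{q^2}. -/

import Mathlib

/-- For q ≡ 1 (mod 6), the power function x ↦ x^{q+2} on F_{q²} is APN:
every derivative equation has at most 2 solutions. -/
theorem power_q_plus_two_APN (p m q : ℕ) (hp : p.Prime) (hodd : Odd p)
    (hm : 0 < m) (hq : q = p ^ m) (h6 : q % 6 = 1)
    (K : Type*) [Field K] [Fintype K] (hK : Fintype.card K = q ^ 2)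
    (a b : K) (ha : a ≠ 0) :
    Nat.card {x : K // (x + a) ^ (q + 2) - x ^ (q + 2) = b} ≤ 2 := by
  classical
  haveI : Fact p.Prime := ⟨hp⟩
  -- basic numerics
  have hp2 : p ≠ 2 := by rcases hodd with ⟨k, hk⟩; omega
  have hq3 : q % 3 = 1 := by omega
  have hp3 : p ≠ 3 := by
    intro h
    have : 3 ∣ q := by rw [hq, h]; exact dvd_pow_self 3 hm.ne'
    omega
  -- characteristic
  haveI hchar : CharP K p := by
    have hc := FiniteField.cast_card_eq_zero K
    rw [hK, hq] at hc
    have hdvd : ringChar K ∣ (p ^ m) ^ 2 := ringChar.dvd (by exact_mod_cast hc)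
    have hpr : (ringChar K).Prime := CharP.char_is_prime K _
    have : ringChar K ∣ p := hpr.dvd_of_dvd_pow (hpr.dvd_of_dvd_pow (by
      rwa [← pow_mul] at hdvd))
    exact ringChar.of_eq ((Nat.prime_dvd_prime_iff_eq hpr hp).mp this)
  -- 2 and 3 are nonzero in K
  have h2K : (2 : K) ≠ 0 := by
    intro h
    have h' : ((2 : ℕ) : K) = 0 := by exact_mod_cast h
    exact hp2 ((Nat.prime_dvd_prime_iff_eq hp Nat.prime_two).mp
      ((CharP.cast_eq_zero_iff K p 2).mp h'))
  have h3K : (3 : K) ≠ 0 := by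
    intro h
    have h' : ((3 : ℕ) : K) = 0 := by exact_mod_cast h
    exact hp3 ((Nat.prime_dvd_prime_iff_eq hp Nat.prime_three).mp
      ((CharP.cast_eq_zero_iff K p 3).mp h'))
  -- Frobenius σ x = x ^ q
  set σ : K →+* K := iterateFrobenius K p m with hσdef
  have hσ : ∀ x : K, σ x = x ^ q := by
    intro x; rw [hσdef, iterateFrobenius_def, hq]
  have hσσ : ∀ x : K, σ (σ x) = x := by
    intro x
    rw [hσ, hσ, ← pow_mul, ← pow_two]
    rw [← hK]
    exact FiniteField.pow_card x
  -- square root of -3, fixed by σ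
  obtain ⟨r, hr2, hσr⟩ : ∃ r : K, r ^ 2 = -3 ∧ σ r = r := by
    haveI : Fact (Nat.Prime 3) := ⟨Nat.prime_three⟩
    have hdvd : 3 ∣ Fintype.card Kˣ := by
      rw [Fintype.card_units, hK]
      have h9 : q ^ 2 % 3 = 1 := by
        have : q ^ 2 = q * q := sq q
        rw [this, Nat.mul_mod, hq3]
      omega
    obtain ⟨ζu, hζu⟩ := exists_prime_orderOf_dvd_card 3 hdvd
    have hζ3 : (ζu : K) ^ 3 = 1 := by
      have h := pow_orderOf_eq_one ζu
      rw [hζu] at h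
      simpa using congrArg Units.val h
    have hζ1 : (ζu : K) ≠ 1 := by
      intro h
      have h' : ζu = 1 := Units.ext (by simpa using h)
      rw [h', orderOf_one] at hζu; omega
    have hζq : (ζu : K) ^ q = (ζu : K) := by
      have hq' : q = 3 * (q / 3) + 1 := by omega
      rw [hq', pow_add, pow_mul, hζ3, one_pow, pow_one, one_mul]
    have hζ2 : (ζu : K) ^ 2 + (ζu : K) + 1 = 0 := by
      have hfac : ((ζu : K) - 1) * ((ζu : K) ^ 2 + (ζu : K) + 1) = 0 := by
        linear_combination hζ3
      rcases mul_eq_zero.mp hfac with h | h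
      · exact absurd (by linear_combination h) hζ1
      · exact h
    refine ⟨2 * (ζu : K) + 1, by linear_combination 4 * hζ2, ?_⟩
    rw [map_add, map_mul, map_ofNat, map_one, hσ, hζq]
  -- the normalized constant
  set A : K := a ^ (q + 2) with hAdef
  have hA : A ≠ 0 := pow_ne_zero _ ha
  set c : K := b / A - 1 with hcdef
  set e : K := c - σ c with hedef
  set t : K := c + σ c with htdef
  have hσe : σ e = -e := by rw [hedef, map_sub, hσσ]; ring
  -- each solution gives normalized data
  have sol_props : ∀ x : K, (x + a) ^ (q + 2) - x ^ (q + 2) = b →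
      ∃ y z : K, x = a * y ∧ σ y = z ∧
        (y - z) * (y + z + 1) = e ∧
        3 * (y + z) ^ 2 + 6 * (y + z) - (y - z) ^ 2 = 2 * t := by
    intro x hx
    set y : K := x / a with hydef
    have hxy : a * y = x := by rw [hydef]; field_simp
    set z : K := σ y with hzdef
    have hσz : σ z = y := by rw [hzdef, hσσ]
    have hyq : (y + 1) ^ q = z + 1 := by
      rw [← hσ (y + 1), map_add, map_one, hzdef]
    have hyq2 : y ^ q = z := by rw [← hσ y, hzdef]
    have h1eq : x + a = a * (y + 1) := by rw [← hxy]; ring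
    rw [h1eq, ← hxy, mul_pow, mul_pow, pow_add (y + 1), pow_add y, hyq, hyq2] at hx
    -- hx : a^(q+2) * ((z+1)*(y+1)^2) - a^(q+2) * (z*y^2) = b
    have hdiv : (z + 1) * (y + 1) ^ 2 - z * y ^ 2 = b / A := by
      rw [eq_div_iff hA, hAdef]
      linear_combination hx
    have h1 : y ^ 2 + 2 * y * z + z + 2 * y = c := by
      rw [hcdef]; linear_combination hdiv
    have h2 : z ^ 2 + 2 * z * y + y + 2 * z = σ c := by
      have h' := congrArg σ h1
      simpa only [map_add, map_mul, map_pow, map_ofNat, ← hzdef, hσz] using h'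
    exact ⟨y, z, hxy.symm, rfl, by linear_combination h1 - h2,
      by linear_combination 2 * h1 + 2 * h2⟩
  -- main claim: any three solutions collide
  have main : ∀ x₁ x₂ x₃ : K,
      (x₁ + a) ^ (q + 2) - x₁ ^ (q + 2) = b →
      (x₂ + a) ^ (q + 2) - x₂ ^ (q + 2) = b →
      (x₃ + a) ^ (q + 2) - x₃ ^ (q + 2) = b →
      x₁ = x₂ ∨ x₁ = x₃ ∨ x₂ = x₃ := by
    intro x₁ x₂ x₃ hx₁ hx₂ hx₃
    by_contra hcon
    push_neg at hcon
    obtain ⟨hne12, hne13, hne23⟩ := hcon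
    obtain ⟨y₁, z₁, hxy₁, hz₁, hE1₁, hE2₁⟩ := sol_props x₁ hx₁
    obtain ⟨y₂, z₂, hxy₂, hz₂, hE1₂, hE2₂⟩ := sol_props x₂ hx₂
    obtain ⟨y₃, z₃, hxy₃, hz₃, hE1₃, hE2₃⟩ := sol_props x₃ hx₃
    have hy12 : y₁ ≠ y₂ := fun h => hne12 (by rw [hxy₁, hxy₂, h])
    have hy13 : y₁ ≠ y₃ := fun h => hne13 (by rw [hxy₁, hxy₃, h])
    have hy23 : y₂ ≠ y₃ := fun h => hne23 (by rw [hxy₂, hxy₃, h])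
    -- σ facts
    have hσz₁ : σ z₁ = y₁ := by rw [← hz₁, hσσ]
    have hσz₂ : σ z₂ = y₂ := by rw [← hz₂, hσσ]
    have hσz₃ : σ z₃ = y₃ := by rw [← hz₃, hσσ]
    by_cases he : e = 0
    · -- case e = 0 : for each i, dᵢ = 0 or sᵢ + 1 = 0
      have hd₁ : y₁ - z₁ = 0 ∨ y₁ + z₁ + 1 = 0 := by
        rcases mul_eq_zero.mp (hE1₁.trans he) with h | h
        exacts [Or.inl h, Or.inr h]
      have hd₂ : y₂ - z₂ = 0 ∨ y₂ + z₂ + 1 = 0 := by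
        rcases mul_eq_zero.mp (hE1₂.trans he) with h | h
        exacts [Or.inl h, Or.inr h]
      have hd₃ : y₃ - z₃ = 0 ∨ y₃ + z₃ + 1 = 0 := by
        rcases mul_eq_zero.mp (hE1₃.trans he) with h | h
        exacts [Or.inl h, Or.inr h]
      -- helper HA : two solutions with d = 0 and any third → False
      have HA : ∀ (u₁ v₁ u₂ v₂ u₃ v₃ : K),
          σ u₁ = v₁ → σ u₃ = v₃ → σ v₃ = u₃ →
          u₁ ≠ u₂ → u₁ ≠ u₃ → u₂ ≠ u₃ →
          3 * (u₁ + v₁) ^ 2 + 6 * (u₁ + v₁) - (u₁ - v₁) ^ 2 = 2 * t →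
          3 * (u₂ + v₂) ^ 2 + 6 * (u₂ + v₂) - (u₂ - v₂) ^ 2 = 2 * t →
          3 * (u₃ + v₃) ^ 2 + 6 * (u₃ + v₃) - (u₃ - v₃) ^ 2 = 2 * t →
          u₁ - v₁ = 0 → u₂ - v₂ = 0 →
          (u₃ - v₃ = 0 ∨ u₃ + v₃ + 1 = 0) → False := by
        intro u₁ v₁ u₂ v₂ u₃ v₃ hs1 hs3 hs3' hne12 hne13 hne23 R1 R2 R3 hd1 hd2 hd3
        have hv1 : v₁ = u₁ := by linear_combination -hd1
        have hv2 : v₂ = u₂ := by linear_combination -hd2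
        have h12 : (12 : K) ≠ 0 := by
          intro h
          have : (2:K) * 2 * 3 = 0 := by linear_combination h
          rcases mul_eq_zero.mp this with h' | h'
          · rcases mul_eq_zero.mp h' with h'' | h'' <;> exact h2K h''
          · exact h3K h'
        rw [hv1] at R1
        rw [hv2] at R2
        have step12 : (12 : K) * ((u₁ - u₂) * (u₁ + u₂ + 1)) = 0 := by
          linear_combination R1 - R2
        have hsum12 : u₁ + u₂ + 1 = 0 := by
          rcases mul_eq_zero.mp step12 with h | h
          · exact absurd h h12
          · rcases mul_eq_zero.mp h with h' | h'
            · exact absurd (by linear_combination h') hne12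
            · exact h'
        rcases hd3 with hd3 | hu3
        · -- third also has d = 0
          have hv3 : v₃ = u₃ := by linear_combination -hd3
          rw [hv3] at R3
          have step13 : (12 : K) * ((u₁ - u₃) * (u₁ + u₃ + 1)) = 0 := by
            linear_combination R1 - R3
          have hsum13 : u₁ + u₃ + 1 = 0 := by
            rcases mul_eq_zero.mp step13 with h | h
            · exact absurd h h12
            · rcases mul_eq_zero.mp h with h' | h'
              · exact absurd (by linear_combination h') hne13
              · exact h'
          exact hne23 (by linear_combination hsum12 - hsum13)
        · -- third has s = -1
          have key : (u₃ - v₃ - r * (2 * u₁ + 1)) * (u₃ - v₃ + r * (2 * u₁ + 1)) = 0 := by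
            linear_combination (-1 : K) * R3 + R1 + (3 * (u₃ + v₃ + 1)) * hu3
              - (2 * u₁ + 1) ^ 2 * hr2
          have hd3z : u₃ - v₃ = 0 := by
            have hσd3 : σ (u₃ - v₃) = -(u₃ - v₃) := by
              rw [map_sub, hs3, hs3']; ring
            have hσr1 : σ (r * (2 * u₁ + 1)) = r * (2 * u₁ + 1) := by
              rw [map_mul, map_add, map_mul, map_one, map_ofNat, hσr, hs1, hv1]
            rcases mul_eq_zero.mp key with h | h
            · have h' : u₃ - v₃ = r * (2 * u₁ + 1) := by linear_combination h
              have hs := congrArg σ h'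
              rw [hσd3, hσr1] at hs
              have h2d : (2:K) * (u₃ - v₃) = 0 := by linear_combination h' - hs
              rcases mul_eq_zero.mp h2d with h'' | h''
              · exact absurd h'' h2K
              · exact h''
            · have h' : u₃ - v₃ = -(r * (2 * u₁ + 1)) := by linear_combination h
              have hs := congrArg σ h'
              rw [hσd3, map_neg, hσr1] at hs
              have h2d : (2:K) * (u₃ - v₃) = 0 := by linear_combination h' - hs
              rcases mul_eq_zero.mp h2d with h'' | h''
              · exact absurd h'' h2K
              · exact h''
          -- now u₃ = v₃ and u₃ + v₃ + 1 = 0, so 2u₃ + 1 = 0 and 2t = -3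
          -- R1 gives 12u₁² + 12u₁ = 2t = -3, so 3(2u₁+1)² = 0
          have h2t : 2 * t = -3 := by
            linear_combination (-1 : K) * R3 + (3 * (u₃ + v₃ + 1)) * hu3 - (u₃ - v₃) * hd3z
          have hsq : (3:K) * (2 * u₁ + 1) ^ 2 = 0 := by
            linear_combination R1 + h2t
          have hu1 : 2 * u₁ + 1 = 0 := by
            rcases mul_eq_zero.mp hsq with h | h
            · exact absurd h h3K
            · exact pow_eq_zero_iff (by norm_num) |>.mp h
          have hu3' : 2 * u₃ + 1 = 0 := by linear_combination hu3 + hd3z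
          have h2d : (2:K) * (u₁ - u₃) = 0 := by linear_combination hu1 - hu3'
          rcases mul_eq_zero.mp h2d with h | h
          · exact h2K h
          · exact hne13 (by linear_combination h)
      -- helper HB : two solutions with s = -1 and any third → False
      have HB : ∀ (u₁ v₁ u₂ v₂ u₃ v₃ : K),
          σ u₁ = v₁ → σ v₁ = u₁ → σ u₃ = v₃ →
          u₁ ≠ u₂ → u₁ ≠ u₃ → u₂ ≠ u₃ →
          3 * (u₁ + v₁) ^ 2 + 6 * (u₁ + v₁) - (u₁ - v₁) ^ 2 = 2 * t →
          3 * (u₂ + v₂) ^ 2 + 6 * (u₂ + v₂) - (u₂ - v₂) ^ 2 = 2 * t →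
          3 * (u₃ + v₃) ^ 2 + 6 * (u₃ + v₃) - (u₃ - v₃) ^ 2 = 2 * t →
          u₁ + v₁ + 1 = 0 → u₂ + v₂ + 1 = 0 →
          (u₃ - v₃ = 0 ∨ u₃ + v₃ + 1 = 0) → False := by
        intro u₁ v₁ u₂ v₂ u₃ v₃ hs1 hs1' hs3 hne12 hne13 hne23 R1 R2 R3 hu1 hu2 hd3
        -- d₁² = -3 - 2t = d₂²
        have hdd : (u₁ - v₁ - (u₂ - v₂)) * (u₁ - v₁ + (u₂ - v₂)) = 0 := by
          linear_combination -R1 + R2 + (3*(u₁+v₁) + 3) * hu1 - (3*(u₂+v₂) + 3) * hu2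
        have hd1ne : u₁ - v₁ = -(u₂ - v₂) := by
          rcases mul_eq_zero.mp hdd with h | h
          · exfalso
            apply hne12
            have hd : u₁ - v₁ = u₂ - v₂ := by linear_combination h
            have hs : u₁ + v₁ = u₂ + v₂ := by linear_combination hu1 - hu2
            have h2d : (2:K) * (u₁ - u₂) = 0 := by linear_combination hd + hs
            rcases mul_eq_zero.mp h2d with h' | h'
            · exact absurd h' h2K
            · linear_combination h'
          · linear_combination h
        rcases hd3 with hd3 | hu3
        · -- third has d = 0 : then d₁ = ±r(s₃+1), σ-fixed → d₁ = 0 → y₁ = y₂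
          have key : (u₁ - v₁ - r * (u₃ + v₃ + 1)) * (u₁ - v₁ + r * (u₃ + v₃ + 1)) = 0 := by
            linear_combination -R1 + R3 + (3*(u₁+v₁) + 3) * hu1
              + (u₃ - v₃) * hd3 - (u₃ + v₃ + 1) ^ 2 * hr2
          have hσd1 : σ (u₁ - v₁) = -(u₁ - v₁) := by
            rw [map_sub, hs1, hs1']; ring
          have hσr3 : σ (r * (u₃ + v₃ + 1)) = r * (u₃ + v₃ + 1) := by
            have hσv3 : σ v₃ = u₃ := by rw [← hs3, hσσ]
            rw [map_mul, map_add, map_add, map_one, hσr, hs3, hσv3]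
            ring
          have hd1z : u₁ - v₁ = 0 := by
            rcases mul_eq_zero.mp key with h | h
            · have h' : u₁ - v₁ = r * (u₃ + v₃ + 1) := by linear_combination h
              have hs := congrArg σ h'
              rw [hσd1, hσr3] at hs
              have h2d : (2:K) * (u₁ - v₁) = 0 := by linear_combination h' - hs
              rcases mul_eq_zero.mp h2d with h'' | h''
              · exact absurd h'' h2K
              · exact h''
            · have h' : u₁ - v₁ = -(r * (u₃ + v₃ + 1)) := by linear_combination h
              have hs := congrArg σ h'
              rw [hσd1, map_neg, hσr3] at hs
              have h2d : (2:K) * (u₁ - v₁) = 0 := by linear_combination h' - hs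
              rcases mul_eq_zero.mp h2d with h'' | h''
              · exact absurd h'' h2K
              · exact h''
          apply hne12
          have hd2z : u₂ - v₂ = 0 := by linear_combination hd1ne - hd1z
          have h2d : (2:K) * (u₁ - u₂) = 0 := by
            linear_combination hd1z - hd2z + hu1 - hu2
          rcases mul_eq_zero.mp h2d with h | h
          · exact absurd h h2K
          · linear_combination h
        · -- third has s = -1 : d₃² = d₁², so d₃ = ±d₁, collision
          have hdd3 : (u₃ - v₃ - (u₁ - v₁)) * (u₃ - v₃ + (u₁ - v₁)) = 0 := by
            linear_combination -R3 + R1 + (3*(u₃+v₃) + 3) * hu3 - (3*(u₁+v₁) + 3) * hu1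
          rcases mul_eq_zero.mp hdd3 with h | h
          · apply hne13
            have hd : u₃ - v₃ = u₁ - v₁ := by linear_combination h
            have hs : u₃ + v₃ = u₁ + v₁ := by linear_combination hu3 - hu1
            have h2d : (2:K) * (u₁ - u₃) = 0 := by linear_combination -hd - hs
            rcases mul_eq_zero.mp h2d with h' | h'
            · exact absurd h' h2K
            · linear_combination h'
          · apply hne23
            have hd : u₃ - v₃ = u₂ - v₂ := by linear_combination h - hd1ne
            have hs : u₃ + v₃ = u₂ + v₂ := by linear_combination hu3 - hu2
            have h2d : (2:K) * (u₂ - u₃) = 0 := by linear_combination -hd - hs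
            rcases mul_eq_zero.mp h2d with h' | h'
            · exact absurd h' h2K
            · linear_combination h'
      -- pigeonhole over the 8 cases
      have hd₁' := hd₁
      have hd₂' := hd₂
      rcases hd₁' with h1 | h1 <;> rcases hd₂' with h2 | h2
      · exact HA y₁ z₁ y₂ z₂ y₃ z₃ hz₁ hz₃ hσz₃ hy12 hy13 hy23 hE2₁ hE2₂ hE2₃ h1 h2 hd₃
      · rcases hd₃ with h3 | h3
        · exact HA y₁ z₁ y₃ z₃ y₂ z₂ hz₁ hz₂ hσz₂ hy13 hy12 (Ne.symm hy23)
            hE2₁ hE2₃ hE2₂ h1 h3 hd₂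
        · exact HB y₂ z₂ y₃ z₃ y₁ z₁ hz₂ hσz₂ hz₁ hy23 (Ne.symm hy12) (Ne.symm hy13)
            hE2₂ hE2₃ hE2₁ h2 h3 hd₁
      · rcases hd₃ with h3 | h3
        · exact HA y₂ z₂ y₃ z₃ y₁ z₁ hz₂ hz₁ hσz₁ hy23 (Ne.symm hy12) (Ne.symm hy13)
            hE2₂ hE2₃ hE2₁ h2 h3 hd₁
        · exact HB y₁ z₁ y₃ z₃ y₂ z₂ hz₁ hσz₁ hz₂ hy13 hy12 (Ne.symm hy23)
            hE2₁ hE2₃ hE2₂ h1 h3 hd₂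
      · exact HB y₁ z₁ y₂ z₂ y₃ z₃ hz₁ hσz₁ hz₃ hy12 hy13 hy23 hE2₁ hE2₂ hE2₃ h1 h2 hd₃
    · -- case e ≠ 0
      -- uᵢ = sᵢ + 1; quartic relations
      have hσu : ∀ u v : K, σ u = v → σ v = u → σ (u + v + 1) = u + v + 1 := by
        intro u v h1 h2
        rw [map_add, map_add, map_one, h1, h2]; ring
      have Q : ∀ u v : K, (u - v) * (u + v + 1) = e →
          3 * (u + v) ^ 2 + 6 * (u + v) - (u - v) ^ 2 = 2 * t →
          3 * (u + v + 1) ^ 4 - (3 + 2 * t) * (u + v + 1) ^ 2 - e ^ 2 = 0 := by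
        intro u v hE1 hE2
        linear_combination (u + v + 1) ^ 2 * hE2 + ((u - v) * (u + v + 1) + e) * hE1
      have Q₁ := Q y₁ z₁ hE1₁ hE2₁
      have Q₂ := Q y₂ z₂ hE1₂ hE2₂
      have Q₃ := Q y₃ z₃ hE1₃ hE2₃
      -- sum branch is impossible
      have sumContra : ∀ u v u' v' : K,
          σ (u + v + 1) = u + v + 1 → σ (u' + v' + 1) = u' + v' + 1 →
          3 * (u + v + 1) ^ 4 - (3 + 2 * t) * (u + v + 1) ^ 2 - e ^ 2 = 0 →
          3 * ((u + v + 1) ^ 2 + (u' + v' + 1) ^ 2) = 3 + 2 * t → False := by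
        intro u v u' v' hfix hfix' hQ hrel
        set U : K := u + v + 1
        set V : K := u' + v' + 1
        have hesq : e ^ 2 + 3 * U ^ 2 * V ^ 2 = 0 := by
          linear_combination U ^ 2 * hrel - hQ
        have key : (e - r * U * V) * (e + r * U * V) = 0 := by
          linear_combination hesq - U ^ 2 * V ^ 2 * hr2
        have hσfix : σ (r * U * V) = r * U * V := by
          rw [map_mul, map_mul, hσr, hfix, hfix']
        rcases mul_eq_zero.mp key with h | h
        · have h' : e = r * U * V := by linear_combination h
          have hs := congrArg σ h'
          rw [hσe, hσfix] at hs
          have h2e : (2:K) * e = 0 := by linear_combination h' - hs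
          rcases mul_eq_zero.mp h2e with h'' | h''
          · exact h2K h''
          · exact he h''
        · have h' : e = -(r * U * V) := by linear_combination h
          have hs := congrArg σ h'
          rw [hσe, map_neg, hσfix] at hs
          have h2e : (2:K) * e = 0 := by linear_combination h' - hs
          rcases mul_eq_zero.mp h2e with h'' | h''
          · exact h2K h''
          · exact he h''
      -- equal u forces equal y
      have equ : ∀ u v u' v' : K, (u - v) * (u + v + 1) = e → (u' - v') * (u' + v' + 1) = e →
          u + v + 1 = u' + v' + 1 → u = u' := by
        intro u v u' v' hE hE' hsum
        have hUne' : u' + v' + 1 ≠ 0 := by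
          intro h; rw [h, mul_zero] at hE'; exact he hE'.symm
        have hd : u - v = u' - v' := by
          have h1 : (u - v) * (u' + v' + 1) = (u' - v') * (u' + v' + 1) := by
            rw [hE', ← hsum]; exact hE
          exact mul_right_cancel₀ hUne' h1
        have hs : u + v = u' + v' := by linear_combination hsum
        have h2d : (2:K) * (u - u') = 0 := by linear_combination hd + hs
        rcases mul_eq_zero.mp h2d with h | h
        · exact absurd h h2K
        · linear_combination h
      -- pairwise: squares are equal
      have pairsq : ∀ u v u' v' : K,
          σ (u + v + 1) = u + v + 1 → σ (u' + v' + 1) = u' + v' + 1 →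
          3 * (u + v + 1) ^ 4 - (3 + 2 * t) * (u + v + 1) ^ 2 - e ^ 2 = 0 →
          3 * (u' + v' + 1) ^ 4 - (3 + 2 * t) * (u' + v' + 1) ^ 2 - e ^ 2 = 0 →
          u + v + 1 = u' + v' + 1 ∨ u + v + 1 = -(u' + v' + 1) := by
        intro u v u' v' hfix hfix' hQ hQ'
        have hfac : ((u + v + 1) ^ 2 - (u' + v' + 1) ^ 2) *
            (3 * ((u + v + 1) ^ 2 + (u' + v' + 1) ^ 2) - (3 + 2 * t)) = 0 := by
          linear_combination hQ - hQ'
        rcases mul_eq_zero.mp hfac with h | h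
        · have : (u + v + 1 - (u' + v' + 1)) * (u + v + 1 + (u' + v' + 1)) = 0 := by
            linear_combination h
          rcases mul_eq_zero.mp this with h' | h'
          · exact Or.inl (by linear_combination h')
          · exact Or.inr (by linear_combination h')
        · exact (sumContra u v u' v' hfix hfix' hQ (by linear_combination h)).elim
      have hfix₁ := hσu y₁ z₁ hz₁ hσz₁
      have hfix₂ := hσu y₂ z₂ hz₂ hσz₂
      have hfix₃ := hσu y₃ z₃ hz₃ hσz₃
      rcases pairsq y₁ z₁ y₂ z₂ hfix₁ hfix₂ Q₁ Q₂ with h12 | h12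
      · exact hy12 (equ y₁ z₁ y₂ z₂ hE1₁ hE1₂ h12)
      · rcases pairsq y₁ z₁ y₃ z₃ hfix₁ hfix₃ Q₁ Q₃ with h13 | h13
        · exact hy13 (equ y₁ z₁ y₃ z₃ hE1₁ hE1₃ h13)
        · have h23 : y₂ + z₂ + 1 = y₃ + z₃ + 1 := by linear_combination h12 - h13
          exact hy23 (equ y₂ z₂ y₃ z₃ hE1₂ hE1₃ h23)
  -- conclude cardinality bound
  by_contra hcard
  push_neg at hcard
  rw [Nat.card_eq_fintype_card, Fintype.card_subtype] at hcard
  rw [Finset.two_lt_card_iff] at hcard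
  obtain ⟨x₁, x₂, x₃, hm1, hm2, hm3, h12, h13, h23⟩ := hcard
  simp only [Finset.mem_filter, Finset.mem_univ, true_and] at hm1 hm2 hm3
  rcases main x₁ x₂ x₃ hm1 hm2 hm3 with h | h | h
  · exact h12 h
  · exact h13 h
  · exact h23 h
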